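/- The RSK superinsertion algorithm gives a bijection between the set of all sequences $(z_{j_1}, \ldots, z_{j_n})$ of letters from an alphabet with $k$ even and $\ell$ odd letters, and the set of pairs $(S, T)$ where $S$ is a $(k,\ell)$-semistandard tableau and $T$ is a standard tableau of the same shape $\lambda \vdash n$ (necessarily a $(k,\ell)$-hook partition). -/

import Mathlib

/-- `lam` is (the normalized row-length function of) a partition of `n`. -/
def IsPartitionOf (n : ℕ) (lam : ℕ → ℕ) : Prop :=
  (∀ i j, i ≤ j → lam j ≤ lam i) ∧ (∀ i, n ≤ i → lam i = 0) ∧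
  ∑ i ∈ Finset.range n, lam i = n

/-- `(k,ℓ)`-semistandard super tableau of shape `lam` (Berele–Regev),
normalized to be `0` off the shape. -/
def SuperSSYT (k ℓ : ℕ) (lam : ℕ → ℕ) (T : ℕ → ℕ → ℕ) : Prop :=
  (∀ a b, b < lam a → 1 ≤ T a b ∧ T a b ≤ k + ℓ) ∧
  (∀ a b, lam a ≤ b → T a b = 0) ∧
  (∀ a b, b + 1 < lam a → T a b ≤ T a (b + 1) ∧ (T a b = T a (b + 1) → T a b ≤ k)) ∧
  (∀ a b, b < lam (a + 1) → T a b ≤ T (a + 1) b ∧ (T a b = T (a + 1) b → k < T a b))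

/-- Standard tableau of shape `lam` with entries `1,…,n`, each appearing in
exactly one cell, strictly increasing along rows and columns; `0` off the
shape. -/
def IsStandardTab (n : ℕ) (lam : ℕ → ℕ) (T : ℕ → ℕ → ℕ) : Prop :=
  (∀ a b, b < lam a → 1 ≤ T a b ∧ T a b ≤ n) ∧
  (∀ a b, lam a ≤ b → T a b = 0) ∧
  (∀ v, 1 ≤ v → v ≤ n → ∃! p : ℕ × ℕ, p.2 < lam p.1 ∧ T p.1 p.2 = v) ∧
  (∀ a b, b + 1 < lam a → T a b < T a (b + 1)) ∧
  (∀ a b, b < lam (a + 1) → T a b < T (a + 1) b)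

namespace SRSK

/-- update a tableau at one cell -/
def upd (S : ℕ → ℕ → ℕ) (r j v : ℕ) : ℕ → ℕ → ℕ :=
  fun a b => if a = r ∧ b = j then v else S a b

/-- update a shape at one row -/
def updf (f : ℕ → ℕ) (r v : ℕ) : ℕ → ℕ :=
  fun a => if a = r then v else f a

@[simp] lemma upd_same (S : ℕ → ℕ → ℕ) (r j v : ℕ) : upd S r j v r j = v := by simp [upd]

lemma upd_ne (S : ℕ → ℕ → ℕ) (r j v a b : ℕ) (h : a ≠ r ∨ b ≠ j) :
    upd S r j v a b = S a b := by
  simp only [upd]; rcases h with h | h <;> simp [h] <;> tauto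

@[simp] lemma updf_same (f : ℕ → ℕ) (r v : ℕ) : updf f r v r = v := by simp [updf]

lemma updf_ne (f : ℕ → ℕ) (r v a : ℕ) (h : a ≠ r) : updf f r v a = f a := by simp [updf, h]

lemma upd_upd (S : ℕ → ℕ → ℕ) (r j v w : ℕ) : upd (upd S r j v) r j w = upd S r j w := by
  funext a b; by_cases h : a = r ∧ b = j
  · obtain ⟨rfl, rfl⟩ := h; simp
  · rw [upd_ne _ _ _ _ _ _ (by tauto), upd_ne _ _ _ _ _ _ (by tauto),
      upd_ne _ _ _ _ _ _ (by tauto)]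

lemma upd_self (S : ℕ → ℕ → ℕ) (r j : ℕ) (h : S r j = v) : upd S r j v = S := by
  funext a b; by_cases hh : a = r ∧ b = j
  · obtain ⟨rfl, rfl⟩ := hh; simp [h]
  · rw [upd_ne _ _ _ _ _ _ (by tauto)]

/-- the "bump" (column-admissibility) relation: `x` may sit strictly above `y`. -/
def Cb (k x y : ℕ) : Prop := x < y ∨ (x = y ∧ k < x)

/-- the row-admissibility relation: `x` may sit weakly left of `y`. -/
def Rb (k x y : ℕ) : Prop := x < y ∨ (x = y ∧ x ≤ k)

instance (k x y : ℕ) : Decidable (Cb k x y) := by unfold Cb; infer_instance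
instance (k x y : ℕ) : Decidable (Rb k x y) := by unfold Rb; infer_instance

lemma Cb_trans {k x y z : ℕ} (h1 : Cb k x y) (h2 : Cb k y z) : Cb k x z := by
  unfold Cb at *; omega
lemma Rb_trans {k x y z : ℕ} (h1 : Rb k x y) (h2 : Rb k y z) : Rb k x z := by
  unfold Rb at *; omega
lemma Rb_Cb {k x y z : ℕ} (h1 : Rb k x y) (h2 : Cb k y z) : Cb k x z := by
  unfold Rb Cb at *; omega
lemma Cb_Rb {k x y z : ℕ} (h1 : Cb k x y) (h2 : Rb k y z) : Cb k x z := by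
  unfold Rb Cb at *; omega
lemma Rb_Cb_Rb {k x y z : ℕ} (h1 : Rb k x y) (h2 : Cb k y z) : Rb k x z := by
  unfold Rb Cb at *; omega
lemma Cb_Rb_Rb {k x y z : ℕ} (h1 : Cb k x y) (h2 : Rb k y z) : Rb k x z := by
  unfold Rb Cb at *; omega
lemma not_Cb_Rb {k x y : ℕ} (hx : 1 ≤ x) (hy : 1 ≤ y) (h : ¬ Cb k x y) : Rb k y x := by
  unfold Cb at h; unfold Rb; omega
lemma not_Rb_of_Cb {k x y : ℕ} (h : Cb k x y) : ¬ Rb k y x := by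
  unfold Cb at h; unfold Rb; omega
lemma Cb_strict_of_Rb {k x y z : ℕ} (h1 : Cb k x y) (h2 : Rb k y z) : x < z := by
  unfold Rb Cb at *; omega

/-- position in row `r` where letter `x` lands (leftmost bumpable entry, or end of row) -/
def findPos (k : ℕ) (lam : ℕ → ℕ) (S : ℕ → ℕ → ℕ) (x r : ℕ) : ℕ :=
  Nat.find (p := fun j => lam r ≤ j ∨ Cb k x (S r j)) ⟨lam r, Or.inl le_rfl⟩

lemma findPos_le (k : ℕ) (lam : ℕ → ℕ) (S : ℕ → ℕ → ℕ) (x r : ℕ) :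
    findPos k lam S x r ≤ lam r := Nat.find_min' _ (Or.inl le_rfl)

lemma findPos_spec (k : ℕ) (lam : ℕ → ℕ) (S : ℕ → ℕ → ℕ) (x r : ℕ) :
    lam r ≤ findPos k lam S x r ∨ Cb k x (S r (findPos k lam S x r)) :=
  Nat.find_spec (p := fun j => lam r ≤ j ∨ Cb k x (S r j)) ⟨lam r, Or.inl le_rfl⟩

lemma findPos_min {k : ℕ} {lam : ℕ → ℕ} {S : ℕ → ℕ → ℕ} {x r j : ℕ}
    (h : j < findPos k lam S x r) : j < lam r ∧ ¬ Cb k x (S r j) := by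
  have := Nat.find_min (p := fun j => lam r ≤ j ∨ Cb k x (S r j)) ⟨lam r, Or.inl le_rfl⟩ h
  rw [not_or] at this
  exact ⟨by omega, this.2⟩

lemma findPos_bump {k : ℕ} {lam : ℕ → ℕ} {S : ℕ → ℕ → ℕ} {x r : ℕ}
    (h : findPos k lam S x r < lam r) : Cb k x (S r (findPos k lam S x r)) := by
  rcases findPos_spec k lam S x r with h' | h'
  · omega
  · exact h'

lemma findPos_eq {k : ℕ} {lam : ℕ → ℕ} {S : ℕ → ℕ → ℕ} {x r j0 : ℕ}
    (hj0 : j0 ≤ lam r) (hP : j0 = lam r ∨ Cb k x (S r j0))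
    (hmin : ∀ j, j < j0 → ¬ Cb k x (S r j)) : findPos k lam S x r = j0 := by
  have h1 : findPos k lam S x r ≤ j0 := by
    apply Nat.find_min'
    rcases hP with h | h
    · exact Or.inl (le_of_eq h.symm)
    · exact Or.inr h
  rcases Nat.lt_or_ge (findPos k lam S x r) j0 with hlt | hge
  · exfalso
    rcases findPos_spec k lam S x r with h | h
    · omega
    · exact hmin _ hlt h
  · omega

/-- rightmost position in row `r` whose entry bumps `y` -/
def rfindPos (k : ℕ) (lam : ℕ → ℕ) (S : ℕ → ℕ → ℕ) (y r : ℕ) : ℕ :=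
  Nat.findGreatest (fun j => Cb k (S r j) y) (lam r - 1)

lemma rfindPos_eq {k : ℕ} {lam : ℕ → ℕ} {S : ℕ → ℕ → ℕ} {y r j0 : ℕ}
    (hj0 : j0 < lam r) (hP : Cb k (S r j0) y)
    (hmax : ∀ j, j0 < j → j < lam r → ¬ Cb k (S r j) y) : rfindPos k lam S y r = j0 := by
  unfold rfindPos
  have hle : j0 ≤ lam r - 1 := by omega
  have hge := Nat.le_findGreatest (P := fun j => Cb k (S r j) y) hle hP
  have hub := Nat.findGreatest_le (P := fun j => Cb k (S r j) y) (lam r - 1)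
  rcases Nat.lt_or_ge j0 (Nat.findGreatest (fun j => Cb k (S r j) y) (lam r - 1)) with hlt | h
  · exfalso
    exact hmax _ hlt (by omega) (Nat.findGreatest_spec (P := fun j => Cb k (S r j) y) hle hP)
  · omega

/-- forward insertion of `x` starting at row `r`; returns new tableau and the row where
the new box was created. -/
def insAux (k : ℕ) (lam : ℕ → ℕ) : ℕ → (ℕ → ℕ → ℕ) → ℕ → ℕ → (ℕ → ℕ → ℕ) × ℕ
  | 0, S, x, r => (upd S r (findPos k lam S x r) x, r)
  | fuel+1, S, x, r =>
    if findPos k lam S x r < lam r then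
      insAux k lam fuel (upd S r (findPos k lam S x r) x) (S r (findPos k lam S x r)) (r + 1)
    else (upd S r (findPos k lam S x r) x, r)

/-- reverse insertion: carry letter `y` upward through rows `r-1, …, 0`. -/
def revAux (k : ℕ) (lam : ℕ → ℕ) : ℕ → (ℕ → ℕ → ℕ) → ℕ → (ℕ → ℕ → ℕ) × ℕ
  | 0, S, y => (S, y)
  | r+1, S, y =>
    revAux k lam r (upd S r (rfindPos k lam S y r) y) (S r (rfindPos k lam S y r))

lemma sssyt_pos {k ℓ : ℕ} {lam : ℕ → ℕ} {S : ℕ → ℕ → ℕ} (h : SuperSSYT k ℓ lam S) :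
    ∀ a b, b < lam a → 1 ≤ S a b ∧ S a b ≤ k + ℓ := h.1
lemma sssyt_zero {k ℓ : ℕ} {lam : ℕ → ℕ} {S : ℕ → ℕ → ℕ} (h : SuperSSYT k ℓ lam S) :
    ∀ a b, lam a ≤ b → S a b = 0 := h.2.1
lemma sssyt_row {k ℓ : ℕ} {lam : ℕ → ℕ} {S : ℕ → ℕ → ℕ} (h : SuperSSYT k ℓ lam S) :
    ∀ a b, b + 1 < lam a → Rb k (S a b) (S a (b+1)) := by
  intro a b hb; have := h.2.2.1 a b hb; unfold Rb; omega
lemma sssyt_col {k ℓ : ℕ} {lam : ℕ → ℕ} {S : ℕ → ℕ → ℕ} (h : SuperSSYT k ℓ lam S) :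
    ∀ a b, b < lam (a+1) → Cb k (S a b) (S (a+1) b) := by
  intro a b hb; have := h.2.2.2 a b hb; unfold Cb; omega

lemma sssyt_mk {k ℓ : ℕ} {lam : ℕ → ℕ} {S : ℕ → ℕ → ℕ}
    (h1 : ∀ a b, b < lam a → 1 ≤ S a b ∧ S a b ≤ k + ℓ)
    (h2 : ∀ a b, lam a ≤ b → S a b = 0)
    (h3 : ∀ a b, b + 1 < lam a → Rb k (S a b) (S a (b+1)))
    (h4 : ∀ a b, b < lam (a+1) → Cb k (S a b) (S (a+1) b)) : SuperSSYT k ℓ lam S := by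
  refine ⟨h1, h2, fun a b hb => ?_, fun a b hb => ?_⟩
  · have := h3 a b hb; unfold Rb at this; omega
  · have := h4 a b hb; unfold Cb at this; omega

lemma sssyt_chain {k ℓ : ℕ} {lam : ℕ → ℕ} {S : ℕ → ℕ → ℕ} (h : SuperSSYT k ℓ lam S) :
    ∀ a j j', j < j' → j' < lam a → Rb k (S a j) (S a j') := by
  intro a j j'
  induction j' with
  | zero => omega
  | succ j' ih =>
    intro hj hlt
    rcases Nat.lt_succ_iff_lt_or_eq.mp hj with h' | h'
    · exact Rb_trans (ih h' (by omega)) (sssyt_row h a j' hlt)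
    · rw [h']; exact sssyt_row h a j' hlt

/-- invariant carried along a forward bumping path at `(S, x, r)`. -/
def Inv (k : ℕ) (lam : ℕ → ℕ) (S : ℕ → ℕ → ℕ) (x r : ℕ) : Prop :=
  r = 0 ∨ ∃ jp, jp < lam (r-1) ∧ (∀ j ≤ jp, Cb k (S (r-1) j) x) ∧
    (lam r ≤ jp ∨ Cb k x (S r jp))

/-- invariant carried along a reverse bumping path at `(S, y, r)`. -/
def InvR (k : ℕ) (lam : ℕ → ℕ) (S : ℕ → ℕ → ℕ) (y r : ℕ) : Prop :=
  r = 0 ∨ ∃ jp, jp < lam (r-1) ∧ Cb k (S (r-1) jp) y ∧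
    (∀ j, jp ≤ j → j < lam r → Cb k y (S r j))

lemma append_case {k ℓ : ℕ} {lam : ℕ → ℕ} {S : ℕ → ℕ → ℕ} {x r : ℕ}
    (anti : ∀ i j, i ≤ j → lam j ≤ lam i)
    (hS : SuperSSYT k ℓ lam S) (hx1 : 1 ≤ x) (hx2 : x ≤ k + ℓ)
    (hInv : Inv k lam S x r) (hnb : lam r ≤ findPos k lam S x r) :
    (r = 0 ∨ lam r < lam (r - 1)) ∧
    SuperSSYT k ℓ (updf lam r (lam r + 1)) (upd S r (lam r) x) ∧
    upd (upd S r (lam r) x) r (lam r) 0 = S := by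
  have hp := sssyt_pos hS
  have hz := sssyt_zero hS
  have hjp' : r = 0 ∨ ∃ jp, jp < lam (r-1) ∧ (∀ j ≤ jp, Cb k (S (r-1) j) x) ∧ lam r ≤ jp := by
    rcases hInv with h0 | ⟨jp, hjp, hall, hor⟩
    · exact Or.inl h0
    · right; refine ⟨jp, hjp, hall, ?_⟩
      by_contra hj
      have hm := findPos_min (show jp < findPos k lam S x r by omega)
      rcases hor with h | h
      · omega
      · exact hm.2 h
  have hcorner : r = 0 ∨ lam r < lam (r - 1) := by
    rcases hjp' with h0 | ⟨jp, hjp, _, hge⟩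
    · exact Or.inl h0
    · right; omega
  refine ⟨hcorner, ?_, ?_⟩
  · refine sssyt_mk ?_ ?_ ?_ ?_
    · intro a b hb
      by_cases hc : a = r ∧ b = lam r
      · obtain ⟨rfl, rfl⟩ := hc; rw [upd_same]; exact ⟨hx1, hx2⟩
      · rw [upd_ne _ _ _ _ _ _ (by tauto)]
        apply hp
        by_cases ha : a = r
        · rw [ha] at hb ⊢
          rw [updf_same] at hb
          have : b ≠ lam r := fun hbb => hc ⟨ha, hbb⟩
          omega
        · rwa [updf_ne _ _ _ _ ha] at hb
    · intro a b hb
      have hab : ¬(a = r ∧ b = lam r) := by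
        rintro ⟨rfl, rfl⟩; rw [updf_same] at hb; omega
      rw [upd_ne _ _ _ _ _ _ (by tauto)]
      apply hz
      by_cases ha : a = r
      · rw [ha] at hb ⊢; rw [updf_same] at hb; omega
      · rwa [updf_ne _ _ _ _ ha] at hb
    · intro a b hb
      by_cases ha : a = r
      · rw [ha] at hb ⊢
        rw [updf_same] at hb
        by_cases hbe : b + 1 = lam r
        · rw [upd_ne _ _ _ _ _ _ (Or.inr (show b ≠ lam r by omega)), hbe, upd_same]
          have hbl : b < lam r := by omega
          have hnc : ¬ Cb k x (S r b) :=
            (findPos_min (show b < findPos k lam S x r by omega)).2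
          exact not_Cb_Rb hx1 (hp r b hbl).1 hnc
        · rw [upd_ne _ _ _ _ _ _ (Or.inr (show b ≠ lam r by omega)),
            upd_ne _ _ _ _ _ _ (Or.inr hbe)]
          exact sssyt_row hS r b (by omega)
      · rw [upd_ne _ _ _ _ _ _ (Or.inl ha), upd_ne _ _ _ _ _ _ (Or.inl ha)]
        exact sssyt_row hS a b (by rwa [updf_ne _ _ _ _ ha] at hb)
    · intro a b hb
      by_cases ha1 : a + 1 = r
      · rw [ha1, updf_same] at hb
        have har : a ≠ r := by omega
        by_cases hbe : b = lam r
        · rw [upd_ne _ _ _ _ _ _ (Or.inl har), ha1, hbe, upd_same]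
          rcases hjp' with h0 | ⟨jp, hjp, hall, hge⟩
          · omega
          · have : a = r - 1 := by omega
            subst this
            exact hall (lam r) hge
        · rw [upd_ne _ _ _ _ _ _ (Or.inl har), upd_ne _ _ _ _ _ _ (Or.inr hbe)]
          have := sssyt_col hS a b (by rw [ha1]; omega)
          rwa [ha1] at this ⊢
      · have hb' : b < lam (a+1) := by rwa [updf_ne _ _ _ _ ha1] at hb
        have e2 : upd S r (lam r) x (a+1) b = S (a+1) b := upd_ne _ _ _ _ _ _ (Or.inl ha1)
        have e1 : upd S r (lam r) x a b = S a b := by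
          by_cases ha : a = r
          · rw [ha] at hb' ⊢
            refine upd_ne _ _ _ _ _ _ (Or.inr ?_)
            have := anti r (r+1) (by omega); omega
          · exact upd_ne _ _ _ _ _ _ (Or.inl ha)
        rw [e1, e2]; exact sssyt_col hS a b hb'
  · rw [upd_upd]; exact upd_self _ _ _ (hz r (lam r) le_rfl)
lemma ins_spec (k ℓ : ℕ) (lam : ℕ → ℕ) (anti : ∀ i j, i ≤ j → lam j ≤ lam i) :
    ∀ (fuel : ℕ) (S : ℕ → ℕ → ℕ) (x r : ℕ),
      SuperSSYT k ℓ lam S → 1 ≤ x → x ≤ k + ℓ → Inv k lam S x r → lam (r + fuel) = 0 →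
      ∀ p, insAux k lam fuel S x r = p →
        r ≤ p.2 ∧ (p.2 = 0 ∨ lam p.2 < lam (p.2 - 1)) ∧
        SuperSSYT k ℓ (updf lam p.2 (lam p.2 + 1)) p.1 ∧
        revAux k lam p.2 (upd p.1 p.2 (lam p.2) 0) (p.1 p.2 (lam p.2)) = revAux k lam r S x := by
  intro fuel
  induction fuel with
  | zero =>
    intro S x r hS hx1 hx2 hInv hEnd p hp
    have hl0 : lam r = 0 := by simpa using hEnd
    have hfp : findPos k lam S x r = lam r := by
      have := findPos_le k lam S x r; omega
    obtain ⟨hc, hv, hres⟩ := append_case anti hS hx1 hx2 hInv (le_of_eq hfp.symm)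
    have hp' : p = (upd S r (lam r) x, r) := by rw [← hp]; simp only [insAux, hfp]
    subst hp'
    refine ⟨le_rfl, hc, hv, ?_⟩
    dsimp only
    rw [hres, upd_same]
  | succ fuel ih =>
    intro S x r hS hx1 hx2 hInv hEnd p hp
    by_cases hb : findPos k lam S x r < lam r
    · -- bump case
      have hCb0 : Cb k x (S r (findPos k lam S x r)) := findPos_bump hb
      have hx1b := sssyt_pos hS r (findPos k lam S x r) hb
      have hmin : ∀ j, j < findPos k lam S x r → Rb k (S r j) x := by
        intro j hj
        have hm := findPos_min hj
        exact not_Cb_Rb hx1 (sssyt_pos hS r j (by omega)).1 hm.2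
      -- the updated tableau is a valid tableau of the same shape
      have hS1 : SuperSSYT k ℓ lam (upd S r (findPos k lam S x r) x) := by
        refine sssyt_mk ?_ ?_ ?_ ?_
        · intro a b hab
          by_cases hc : a = r ∧ b = findPos k lam S x r
          · obtain ⟨rfl, rfl⟩ := hc; rw [upd_same]; exact ⟨hx1, hx2⟩
          · rw [upd_ne _ _ _ _ _ _ (by tauto)]; exact sssyt_pos hS a b hab
        · intro a b hab
          have : ¬(a = r ∧ b = findPos k lam S x r) := by
            rintro ⟨rfl, rfl⟩; omega
          rw [upd_ne _ _ _ _ _ _ (by tauto)]; exact sssyt_zero hS a b hab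
        · intro a b hab
          by_cases ha : a = r
          · rw [ha] at hab ⊢
            by_cases h1 : b + 1 = findPos k lam S x r
            · rw [upd_ne _ _ _ _ _ _ (Or.inr (show b ≠ findPos k lam S x r by omega)),
                h1, upd_same]
              exact hmin b (by omega)
            · by_cases h2 : b = findPos k lam S x r
              · have e1 : upd S r (findPos k lam S x r) x r b = x := by rw [h2, upd_same]
                have e2 : upd S r (findPos k lam S x r) x r (b+1) = S r (b+1) :=
                  upd_ne _ _ _ _ _ _ (Or.inr h1)
                rw [e1, e2]
                have hcb : Cb k x (S r b) := by rw [h2]; exact hCb0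
                exact Or.inl (Cb_strict_of_Rb hcb (sssyt_row hS r b hab))
              · rw [upd_ne _ _ _ _ _ _ (Or.inr h2), upd_ne _ _ _ _ _ _ (Or.inr h1)]
                exact sssyt_row hS r b hab
          · rw [upd_ne _ _ _ _ _ _ (Or.inl ha), upd_ne _ _ _ _ _ _ (Or.inl ha)]
            exact sssyt_row hS a b hab
        · intro a b hab
          by_cases ha1 : a + 1 = r
          · have har : a ≠ r := by omega
            rw [upd_ne _ _ _ _ _ _ (Or.inl har)]
            by_cases hbj : b = findPos k lam S x r
            · rw [ha1, hbj, upd_same]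
              rcases hInv with h0 | ⟨jp, hjp, hall, hor⟩
              · omega
              · have hle : findPos k lam S x r ≤ jp := Nat.find_min' _ hor
                have : a = r - 1 := by omega
                rw [this]
                exact hall (findPos k lam S x r) hle
            · rw [upd_ne _ _ _ _ _ _ (Or.inr hbj)]
              have := sssyt_col hS a b (by rw [ha1]; rwa [ha1] at hab)
              exact this
          · rw [upd_ne _ _ _ _ _ _ (Or.inl ha1)]
            by_cases hc : a = r ∧ b = findPos k lam S x r
            · obtain ⟨rfl, rfl⟩ := hc
              rw [upd_same]
              exact Cb_trans hCb0 (sssyt_col hS _ _ hab)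
            · rw [upd_ne _ _ _ _ _ _ (by tauto)]
              exact sssyt_col hS a b hab
      -- invariant for the next row
      have hInv1 : Inv k lam (upd S r (findPos k lam S x r) x) (S r (findPos k lam S x r)) (r+1) := by
        right
        refine ⟨findPos k lam S x r, ?_, ?_, ?_⟩
        · simpa using hb
        · intro j hj
          simp only [Nat.add_sub_cancel]
          rcases Nat.lt_or_ge j (findPos k lam S x r) with h' | h'
          · rw [upd_ne _ _ _ _ _ _ (Or.inr (by omega))]
            exact Rb_Cb (hmin j h') hCb0
          · have : j = findPos k lam S x r := by omega
            rw [this, upd_same]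
            exact hCb0
        · by_cases hj : findPos k lam S x r < lam (r+1)
          · right
            rw [upd_ne _ _ _ _ _ _ (Or.inl (by omega))]
            exact sssyt_col hS r _ hj
          · left; omega
      have hEnd1 : lam ((r+1) + fuel) = 0 := by
        rw [show (r+1)+fuel = r + (fuel+1) by omega]; exact hEnd
      have hp1 : insAux k lam fuel (upd S r (findPos k lam S x r) x) (S r (findPos k lam S x r)) (r+1) = p := by
        rw [← hp]; simp only [insAux, if_pos hb]
      obtain ⟨h1, h2, h3, h4⟩ := ih _ _ _ hS1 hx1b.1 hx1b.2 hInv1 hEnd1 p hp1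
      refine ⟨by omega, h2, h3, ?_⟩
      rw [h4]
      -- one reverse step undoes the bump
      have hrj : rfindPos k lam (upd S r (findPos k lam S x r) x) (S r (findPos k lam S x r)) r
          = findPos k lam S x r := by
        refine rfindPos_eq hb ?_ ?_
        · rw [upd_same]; exact hCb0
        · intro j hj1 hj2
          rw [upd_ne _ _ _ _ _ _ (Or.inr (by omega))]
          exact fun hc => not_Rb_of_Cb hc (sssyt_chain hS r _ _ hj1 hj2)
      simp only [revAux, hrj]
      rw [upd_upd, upd_self _ _ _ rfl, upd_same]
    · have hnb : lam r ≤ findPos k lam S x r := le_of_not_gt hb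
      have hfp : findPos k lam S x r = lam r := le_antisymm (findPos_le k lam S x r) hnb
      obtain ⟨hc, hv, hres⟩ := append_case anti hS hx1 hx2 hInv hnb
      have hp' : p = (upd S r (lam r) x, r) := by rw [← hp]; simp only [insAux]; rw [if_neg hb, hfp]
      subst hp'
      refine ⟨le_rfl, hc, hv, ?_⟩
      dsimp only
      rw [hres, upd_same]
lemma rev_spec (k ℓ : ℕ) (lam : ℕ → ℕ) (anti : ∀ i j, i ≤ j → lam j ≤ lam i) :
    ∀ (r : ℕ) (S : ℕ → ℕ → ℕ) (y : ℕ),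
      SuperSSYT k ℓ lam S → 1 ≤ y → y ≤ k + ℓ → InvR k lam S y r →
      ∀ p, revAux k lam r S y = p →
        SuperSSYT k ℓ lam p.1 ∧ 1 ≤ p.2 ∧ p.2 ≤ k + ℓ ∧
        ∀ f, insAux k lam (r + f) p.1 p.2 0 = insAux k lam f S y r := by
  intro r
  induction r with
  | zero =>
    intro S y hS hy1 hy2 _ p hp
    have : p = (S, y) := by rw [← hp]; rfl
    subst this
    exact ⟨hS, hy1, hy2, fun f => by rw [Nat.zero_add]⟩
  | succ r ih =>
    intro S y hS hy1 hy2 hInv p hp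
    rcases hInv with h0 | ⟨jp, hjp, hCjp, hall⟩
    · omega
    simp only [Nat.add_sub_cancel] at hjp hCjp
    have hlr : 1 ≤ lam r := by omega
    -- locate the reverse bump position
    have hge : jp ≤ rfindPos k lam S y r :=
      Nat.le_findGreatest (P := fun j => Cb k (S r j) y) (by omega) hCjp
    have hub : rfindPos k lam S y r ≤ lam r - 1 :=
      Nat.findGreatest_le (P := fun j => Cb k (S r j) y) (lam r - 1)
    have hj0 : rfindPos k lam S y r < lam r := by omega
    have hP : Cb k (S r (rfindPos k lam S y r)) y :=
      Nat.findGreatest_spec (P := fun j => Cb k (S r j) y) (by omega : jp ≤ lam r - 1) hCjp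
    have hmax : ∀ j, rfindPos k lam S y r < j → j < lam r → ¬ Cb k (S r j) y := by
      intro j h1 h2
      exact Nat.findGreatest_is_greatest (P := fun j => Cb k (S r j) y) h1 (by omega)
    have hx := sssyt_pos hS r (rfindPos k lam S y r) hj0
    -- validity of the updated tableau
    have hS1 : SuperSSYT k ℓ lam (upd S r (rfindPos k lam S y r) y) := by
      refine sssyt_mk ?_ ?_ ?_ ?_
      · intro a b hab
        by_cases hc : a = r ∧ b = rfindPos k lam S y r
        · obtain ⟨rfl, rfl⟩ := hc; rw [upd_same]; exact ⟨hy1, hy2⟩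
        · rw [upd_ne _ _ _ _ _ _ (by tauto)]; exact sssyt_pos hS a b hab
      · intro a b hab
        have : ¬(a = r ∧ b = rfindPos k lam S y r) := by
          rintro ⟨rfl, rfl⟩; omega
        rw [upd_ne _ _ _ _ _ _ (by tauto)]; exact sssyt_zero hS a b hab
      · intro a b hab
        by_cases ha : a = r
        · rw [ha] at hab ⊢
          by_cases h1 : b + 1 = rfindPos k lam S y r
          · rw [upd_ne _ _ _ _ _ _ (Or.inr (show b ≠ rfindPos k lam S y r by omega)),
              h1, upd_same]
            have : Rb k (S r b) (S r (b+1)) := sssyt_row hS r b hab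
            rw [h1] at this
            exact Rb_Cb_Rb this hP
          · by_cases h2 : b = rfindPos k lam S y r
            · have e1 : upd S r (rfindPos k lam S y r) y r b = y := by rw [h2, upd_same]
              have e2 : upd S r (rfindPos k lam S y r) y r (b+1) = S r (b+1) :=
                upd_ne _ _ _ _ _ _ (Or.inr h1)
              rw [e1, e2]
              have hnc : ¬ Cb k (S r (b+1)) y := hmax (b+1) (by omega) hab
              exact not_Cb_Rb (sssyt_pos hS r (b+1) hab).1 hy1 hnc
            · rw [upd_ne _ _ _ _ _ _ (Or.inr h2), upd_ne _ _ _ _ _ _ (Or.inr h1)]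
              exact sssyt_row hS r b hab
        · rw [upd_ne _ _ _ _ _ _ (Or.inl ha), upd_ne _ _ _ _ _ _ (Or.inl ha)]
          exact sssyt_row hS a b hab
      · intro a b hab
        by_cases ha1 : a + 1 = r
        · have har : a ≠ r := by omega
          rw [upd_ne _ _ _ _ _ _ (Or.inl har)]
          by_cases hbj : b = rfindPos k lam S y r
          · rw [ha1, hbj, upd_same]
            have hcol : Cb k (S a b) (S (a+1) b) := sssyt_col hS a b (by rw [ha1]; omega)
            rw [ha1, hbj] at hcol
            exact Cb_trans hcol hP
          · rw [upd_ne _ _ _ _ _ _ (Or.inr hbj)]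
            exact sssyt_col hS a b hab
        · rw [upd_ne _ _ _ _ _ _ (Or.inl ha1)]
          by_cases hc : a = r ∧ b = rfindPos k lam S y r
          · obtain ⟨rfl, rfl⟩ := hc
            rw [upd_same]
            exact hall _ hge hab
          · rw [upd_ne _ _ _ _ _ _ (by tauto)]
            exact sssyt_col hS a b hab
    -- invariant for the next step up
    have hInv1 : InvR k lam (upd S r (rfindPos k lam S y r) y) (S r (rfindPos k lam S y r)) r := by
      rcases Nat.eq_zero_or_pos r with h0 | hr
      · exact Or.inl h0
      right
      refine ⟨rfindPos k lam S y r, ?_, ?_, ?_⟩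
      · have := anti (r-1) r (by omega); omega
      · rw [upd_ne _ _ _ _ _ _ (Or.inl (by omega))]
        have := sssyt_col hS (r-1) (rfindPos k lam S y r) (by rw [show r - 1 + 1 = r by omega]; exact hj0)
        rwa [show r - 1 + 1 = r by omega] at this
      · intro j hj1 hj2
        rcases Nat.lt_or_ge (rfindPos k lam S y r) j with h' | h'
        · rw [upd_ne _ _ _ _ _ _ (Or.inr (by omega))]
          have hnc : ¬ Cb k (S r j) y := hmax j h' hj2
          exact Cb_Rb hP (not_Cb_Rb (sssyt_pos hS r j hj2).1 hy1 hnc)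
        · have : j = rfindPos k lam S y r := by omega
          rw [this, upd_same]
          exact hP
    have hp1 : revAux k lam r (upd S r (rfindPos k lam S y r) y) (S r (rfindPos k lam S y r)) = p := by
      rw [← hp]; rfl
    obtain ⟨h1, h2, h3, h4⟩ := ih _ _ hS1 hx.1 hx.2 hInv1 p hp1
    refine ⟨h1, h2, h3, fun f => ?_⟩
    rw [show (r+1) + f = r + (f+1) by omega, h4 (f+1)]
    -- one forward step redoes the reverse bump
    have hfp : findPos k lam (upd S r (rfindPos k lam S y r) y) (S r (rfindPos k lam S y r)) r
        = rfindPos k lam S y r := by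
      refine findPos_eq (by omega) ?_ ?_
      · right; rw [upd_same]; exact hP
      · intro j hj
        rw [upd_ne _ _ _ _ _ _ (Or.inr (by omega))]
        exact fun hc => not_Rb_of_Cb hc (sssyt_chain hS r _ _ hj hj0)
    simp only [insAux]
    rw [hfp, if_pos hj0, upd_upd, upd_self _ _ _ rfl, upd_same]
lemma sum_updf (f : ℕ → ℕ) (r v N : ℕ) (h : r < N) :
    ∑ i ∈ Finset.range N, updf f r v i + f r = ∑ i ∈ Finset.range N, f i + v := by
  have hm : r ∈ Finset.range N := Finset.mem_range.mpr h
  have e1 : updf f r v r + ∑ i ∈ (Finset.range N).erase r, updf f r v i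
      = ∑ i ∈ Finset.range N, updf f r v i := Finset.add_sum_erase _ _ hm
  have e2 : f r + ∑ i ∈ (Finset.range N).erase r, f i
      = ∑ i ∈ Finset.range N, f i := Finset.add_sum_erase _ _ hm
  have e3 : ∑ i ∈ (Finset.range N).erase r, updf f r v i
      = ∑ i ∈ (Finset.range N).erase r, f i :=
    Finset.sum_congr rfl (fun i hi => updf_ne _ _ _ _ (Finset.ne_of_mem_erase hi))
  rw [updf_same] at e1
  omega

lemma partition_add {n : ℕ} {lam : ℕ → ℕ} (hlam : IsPartitionOf n lam) {re : ℕ}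
    (hc : re = 0 ∨ lam re < lam (re - 1)) :
    re ≤ n ∧ IsPartitionOf (n+1) (updf lam re (lam re + 1)) := by
  obtain ⟨anti, hz, hsum⟩ := hlam
  have hre : re ≤ n := by
    rcases hc with h0 | h
    · omega
    · by_contra hh
      have h1 := hz (re - 1) (by omega)
      have h2 := hz re (by omega)
      omega
  refine ⟨hre, ?_, ?_, ?_⟩
  · intro i j hij
    by_cases hj : j = re
    · rw [hj, updf_same]
      by_cases hi : i = re
      · rw [hi, updf_same]
      · rw [updf_ne _ _ _ _ hi]
        rw [hj] at hij
        rcases hc with h0 | h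
        · omega
        · have := anti i (re-1) (by omega); omega
    · rw [updf_ne _ _ _ _ hj]
      by_cases hi : i = re
      · have h1 := anti i j hij
        rw [hi] at h1
        rw [hi, updf_same]; omega
      · rw [updf_ne _ _ _ _ hi]; exact anti i j hij
  · intro i hi
    rw [updf_ne _ _ _ _ (by omega)]
    exact hz i (by omega)
  · have hs := sum_updf lam re (lam re + 1) (n+1) (by omega)
    have hss : ∑ i ∈ Finset.range (n+1), lam i = ∑ i ∈ Finset.range n, lam i + lam n :=
      Finset.sum_range_succ _ _
    have hn0 : lam n = 0 := hz n le_rfl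
    omega

lemma standard_add {n : ℕ} {lam : ℕ → ℕ} {T : ℕ → ℕ → ℕ} (hlam : IsPartitionOf n lam)
    (hT : IsStandardTab n lam T) {re : ℕ} (hc : re = 0 ∨ lam re < lam (re - 1)) :
    IsStandardTab (n+1) (updf lam re (lam re + 1)) (upd T re (lam re) (n+1)) := by
  obtain ⟨anti, hz, hsum⟩ := hlam
  obtain ⟨hpos, hzero, huniq, hrow, hcol⟩ := hT
  refine ⟨?_, ?_, ?_, ?_, ?_⟩
  · intro a b hab
    by_cases hcell : a = re ∧ b = lam re
    · obtain ⟨rfl, rfl⟩ := hcell; rw [upd_same]; omega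
    · rw [upd_ne _ _ _ _ _ _ (by tauto)]
      have hb : b < lam a := by
        by_cases ha : a = re
        · rw [ha] at hab ⊢; rw [updf_same] at hab
          have : b ≠ lam re := fun hh => hcell ⟨ha, hh⟩
          omega
        · rwa [updf_ne _ _ _ _ ha] at hab
      have := hpos a b hb; omega
  · intro a b hab
    have hcell : ¬(a = re ∧ b = lam re) := by
      rintro ⟨rfl, rfl⟩; rw [updf_same] at hab; omega
    rw [upd_ne _ _ _ _ _ _ (by tauto)]
    apply hzero
    by_cases ha : a = re
    · rw [ha] at hab ⊢; rw [updf_same] at hab; omega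
    · rwa [updf_ne _ _ _ _ ha] at hab
  · intro v hv1 hv2
    by_cases hvn : v ≤ n
    · obtain ⟨q, ⟨hq1, hq2⟩, hq3⟩ := huniq v hv1 hvn
      have hz0 : T re (lam re) = 0 := hzero re (lam re) le_rfl
      have hqcell : ¬(q.1 = re ∧ q.2 = lam re) := by
        rintro ⟨h1, h2⟩; rw [h1, h2] at hq2; omega
      refine ⟨q, ⟨?_, ?_⟩, ?_⟩
      · by_cases ha : q.1 = re
        · rw [ha, updf_same]; rw [ha] at hq1; omega
        · rw [updf_ne _ _ _ _ ha]; exact hq1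
      · rw [upd_ne _ _ _ _ _ _ (by tauto)]; exact hq2
      · rintro q' ⟨hq1', hq2'⟩
        have hq'cell : ¬(q'.1 = re ∧ q'.2 = lam re) := by
          rintro ⟨h1, h2⟩
          rw [h1, h2, upd_same] at hq2'
          omega
        rw [upd_ne _ _ _ _ _ _ (by tauto)] at hq2'
        apply hq3
        refine ⟨?_, hq2'⟩
        by_cases ha : q'.1 = re
        · rw [ha] at hq1' ⊢; rw [updf_same] at hq1'
          have : q'.2 ≠ lam re := fun hh => hq'cell ⟨ha, hh⟩
          omega
        · rw [updf_ne _ _ _ _ ha] at hq1'; exact hq1'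
    · refine ⟨(re, lam re), ⟨?_, ?_⟩, ?_⟩
      · show lam re < updf lam re (lam re + 1) re
        rw [updf_same]; omega
      · show upd T re (lam re) (n+1) re (lam re) = v
        rw [upd_same]; omega
      · rintro ⟨a, b⟩ ⟨hq1', hq2'⟩
        dsimp only at hq1' hq2'
        by_cases hcell : a = re ∧ b = lam re
        · exact Prod.ext hcell.1 hcell.2
        · exfalso
          rw [upd_ne _ _ _ _ _ _ (by tauto)] at hq2'
          have hb : b < lam a := by
            by_cases ha : a = re
            · rw [ha] at hq1' ⊢; rw [updf_same] at hq1'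
              have : b ≠ lam re := fun hh => hcell ⟨ha, hh⟩
              omega
            · rwa [updf_ne _ _ _ _ ha] at hq1'
          have := hpos a b hb; omega
  · intro a b hab
    by_cases ha : a = re
    · rw [ha] at hab ⊢
      rw [updf_same] at hab
      by_cases h1 : b + 1 = lam re
      · rw [upd_ne _ _ _ _ _ _ (Or.inr (show b ≠ lam re by omega)), h1, upd_same]
        have := hpos re b (by omega); omega
      · rw [upd_ne _ _ _ _ _ _ (Or.inr (show b ≠ lam re by omega)),
          upd_ne _ _ _ _ _ _ (Or.inr h1)]
        exact hrow re b (by omega)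
    · rw [upd_ne _ _ _ _ _ _ (Or.inl ha), upd_ne _ _ _ _ _ _ (Or.inl ha)]
      exact hrow a b (by rwa [updf_ne _ _ _ _ ha] at hab)
  · intro a b hab
    by_cases ha1 : a + 1 = re
    · rw [ha1, updf_same] at hab
      have har : a ≠ re := by omega
      by_cases hbe : b = lam re
      · rw [upd_ne _ _ _ _ _ _ (Or.inl har), ha1, hbe, upd_same]
        have hbl : lam re < lam a := by
          rcases hc with h0 | h
          · omega
          · have haa : a = re - 1 := by omega
            rw [haa]; exact h
        have := hpos a (lam re) hbl; omega
      · rw [upd_ne _ _ _ _ _ _ (Or.inl har), upd_ne _ _ _ _ _ _ (Or.inr hbe)]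
        exact hcol a b (by rw [ha1]; omega)
    · have hb' : b < lam (a+1) := by rwa [updf_ne _ _ _ _ ha1] at hab
      have e2 : upd T re (lam re) (n+1) (a+1) b = T (a+1) b := upd_ne _ _ _ _ _ _ (Or.inl ha1)
      have e1 : upd T re (lam re) (n+1) a b = T a b := by
        by_cases ha : a = re
        · rw [ha] at hb' ⊢
          refine upd_ne _ _ _ _ _ _ (Or.inr ?_)
          have := anti re (re+1) (by omega); omega
        · exact upd_ne _ _ _ _ _ _ (Or.inl ha)
      rw [e1, e2]; exact hcol a b hb'

lemma partition_sub {n : ℕ} {lam' : ℕ → ℕ} (hlam : IsPartitionOf (n+1) lam') {re jc : ℕ}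
    (hr : jc + 1 = lam' re) (hbel : lam' (re+1) ≤ jc) :
    re ≤ n ∧ IsPartitionOf n (updf lam' re jc) := by
  obtain ⟨anti, hz, hsum⟩ := hlam
  have hre : re ≤ n := by
    by_contra hh
    have := hz re (by omega); omega
  have hlast : lam' n ≤ 1 := by
    by_contra hh
    have hmono : ∀ i ∈ Finset.range (n+1), 2 ≤ lam' i := by
      intro i hi
      have := anti i n (by have := Finset.mem_range.mp hi; omega)
      omega
    have hle2 : ∑ i ∈ Finset.range (n+1), 2 ≤ ∑ i ∈ Finset.range (n+1), lam' i :=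
      Finset.sum_le_sum hmono
    rw [Finset.sum_const, Finset.card_range, smul_eq_mul] at hle2
    omega
  have hn0 : re < n → lam' n = 0 := by
    intro hlt
    by_contra hh
    have h1 : lam' n = 1 := by omega
    have hge1 : ∀ i ∈ Finset.range (n+1), 1 ≤ lam' i := by
      intro i hi
      have := anti i n (Nat.lt_succ_iff.mp (Finset.mem_range.mp hi))
      omega
    have h2 : 2 ≤ lam' re := by
      have := anti (re+1) n (by omega)
      omega
    have hstrict : ∑ _i ∈ Finset.range (n+1), 1 < ∑ i ∈ Finset.range (n+1), lam' i :=
      Finset.sum_lt_sum hge1 ⟨re, Finset.mem_range.mpr (by omega), by omega⟩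
    rw [Finset.sum_const, Finset.card_range, smul_eq_mul] at hstrict
    omega
  refine ⟨hre, ?_, ?_, ?_⟩
  · intro i j hij
    by_cases hj : j = re
    · rw [hj, updf_same]
      by_cases hi : i = re
      · rw [hi, updf_same]
      · rw [updf_ne _ _ _ _ hi]
        have := anti i re (by omega); omega
    · rw [updf_ne _ _ _ _ hj]
      by_cases hi : i = re
      · rw [hi, updf_same]
        rw [hi] at hij
        have := anti (re+1) j (by omega); omega
      · rw [updf_ne _ _ _ _ hi]; exact anti i j hij
  · intro i hi
    by_cases hire : i = re
    · rw [hire, updf_same]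
      have hren : re = n := by omega
      rw [hren] at hr
      omega
    · rw [updf_ne _ _ _ _ hire]
      rcases Nat.lt_or_ge i (n+1) with h' | h'
      · have hin : i = n := by omega
        rw [hin]
        exact hn0 (by omega)
      · exact hz i (by omega)
  · rcases Nat.lt_or_ge re n with hlt | hge
    · have hs := sum_updf lam' re jc n hlt
      have hss : ∑ i ∈ Finset.range (n+1), lam' i = ∑ i ∈ Finset.range n, lam' i + lam' n :=
        Finset.sum_range_succ _ _
      have := hn0 hlt
      omega
    · have hren : re = n := by omega
      have he : ∀ i ∈ Finset.range n, updf lam' re jc i = lam' i := by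
        intro i hi
        exact updf_ne _ _ _ _ (by have := Finset.mem_range.mp hi; omega)
      have hcg : ∑ i ∈ Finset.range n, updf lam' re jc i = ∑ i ∈ Finset.range n, lam' i :=
        Finset.sum_congr rfl he
      have hss : ∑ i ∈ Finset.range (n+1), lam' i = ∑ i ∈ Finset.range n, lam' i + lam' n :=
        Finset.sum_range_succ _ _
      rw [hren] at hr
      omega

lemma standard_sub {n : ℕ} {lam' : ℕ → ℕ} {T' : ℕ → ℕ → ℕ}
    (hT : IsStandardTab (n+1) lam' T')
    {re jc : ℕ} (hr : jc + 1 = lam' re)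
    (anti2 : ∀ i j, i ≤ j → updf lam' re jc j ≤ updf lam' re jc i)
    (hval : T' re jc = n+1) :
    IsStandardTab n (updf lam' re jc) (upd T' re jc 0) := by
  obtain ⟨hpos, hzero, huniq, hrow, hcol⟩ := hT
  have hcell : ∀ a b, b < updf lam' re jc a → b < lam' a ∧ ¬(a = re ∧ b = jc) := by
    intro a b hab
    by_cases ha : a = re
    · rw [ha, updf_same] at hab
      constructor
      · rw [ha]; omega
      · rintro ⟨_, h2⟩; omega
    · rw [updf_ne _ _ _ _ ha] at hab
      exact ⟨hab, fun hh => ha hh.1⟩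
  have hle : ∀ a b, b < lam' a → ¬(a = re ∧ b = jc) → T' a b ≤ n := by
    intro a b hb hne
    have h1 := hpos a b hb
    by_cases hv : T' a b = n+1
    · exfalso
      obtain ⟨q, _, hq3⟩ := huniq (n+1) (by omega) le_rfl
      have e1 := hq3 (a, b) ⟨hb, hv⟩
      have e2 := hq3 (re, jc) ⟨show jc < lam' re by omega, hval⟩
      have e3 : (a, b) = ((re : ℕ), jc) := e1.trans e2.symm
      exact hne ⟨congrArg Prod.fst e3, congrArg Prod.snd e3⟩
    · omega
  refine ⟨?_, ?_, ?_, ?_, ?_⟩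
  · intro a b hab
    obtain ⟨hb, hne⟩ := hcell a b hab
    rw [upd_ne _ _ _ _ _ _ (by tauto)]
    exact ⟨(hpos a b hb).1, hle a b hb hne⟩
  · intro a b hab
    by_cases hc2 : a = re ∧ b = jc
    · obtain ⟨rfl, rfl⟩ := hc2; rw [upd_same]
    · rw [upd_ne _ _ _ _ _ _ (by tauto)]
      apply hzero
      by_cases ha : a = re
      · rw [ha, updf_same] at hab
        rw [ha]
        have : b ≠ jc := fun hh => hc2 ⟨ha, hh⟩
        omega
      · rwa [updf_ne _ _ _ _ ha] at hab
  · intro v hv1 hv2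
    obtain ⟨q, ⟨hq1, hq2⟩, hq3⟩ := huniq v hv1 (by omega)
    have hqne : ¬(q.1 = re ∧ q.2 = jc) := by
      rintro ⟨h1, h2⟩; rw [h1, h2] at hq2; omega
    refine ⟨q, ⟨?_, ?_⟩, ?_⟩
    · by_cases ha : q.1 = re
      · rw [ha, updf_same]
        have : q.2 ≠ jc := fun hh => hqne ⟨ha, hh⟩
        rw [ha] at hq1; omega
      · rw [updf_ne _ _ _ _ ha]; exact hq1
    · rw [upd_ne _ _ _ _ _ _ (by tauto)]; exact hq2
    · rintro q' ⟨hq1', hq2'⟩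
      obtain ⟨hb', hne'⟩ := hcell q'.1 q'.2 hq1'
      rw [upd_ne _ _ _ _ _ _ (by tauto)] at hq2'
      exact hq3 q' ⟨hb', hq2'⟩
  · intro a b hab
    obtain ⟨hb1, hne1⟩ := hcell a (b+1) hab
    have hb0 : b < updf lam' re jc a := by omega
    obtain ⟨hb0', hne0⟩ := hcell a b hb0
    rw [upd_ne _ _ _ _ _ _ (by tauto), upd_ne _ _ _ _ _ _ (by tauto)]
    exact hrow a b hb1
  · intro a b hab
    obtain ⟨hb1, hne1⟩ := hcell (a+1) b hab
    have hb0 : b < updf lam' re jc a := by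
      have := anti2 a (a+1) (by omega); omega
    obtain ⟨hb0', hne0⟩ := hcell a b hb0
    rw [upd_ne _ _ _ _ _ _ (by tauto), upd_ne _ _ _ _ _ _ (by tauto)]
    exact hcol a b hb1

lemma sssyt_sub {k ℓ : ℕ} {lam' : ℕ → ℕ} {S' : ℕ → ℕ → ℕ}
    (hS : SuperSSYT k ℓ lam' S') {re jc : ℕ} (hr : jc + 1 = lam' re)
    (anti2 : ∀ i j, i ≤ j → updf lam' re jc j ≤ updf lam' re jc i) :
    SuperSSYT k ℓ (updf lam' re jc) (upd S' re jc 0) := by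
  have hcell : ∀ a b, b < updf lam' re jc a → b < lam' a ∧ ¬(a = re ∧ b = jc) := by
    intro a b hab
    by_cases ha : a = re
    · rw [ha, updf_same] at hab
      constructor
      · rw [ha]; omega
      · rintro ⟨_, h2⟩; omega
    · rw [updf_ne _ _ _ _ ha] at hab
      exact ⟨hab, fun hh => ha hh.1⟩
  refine sssyt_mk ?_ ?_ ?_ ?_
  · intro a b hab
    obtain ⟨hb, hne⟩ := hcell a b hab
    rw [upd_ne _ _ _ _ _ _ (by tauto)]
    exact sssyt_pos hS a b hb
  · intro a b hab
    by_cases hc2 : a = re ∧ b = jc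
    · obtain ⟨rfl, rfl⟩ := hc2; rw [upd_same]
    · rw [upd_ne _ _ _ _ _ _ (by tauto)]
      apply sssyt_zero hS
      by_cases ha : a = re
      · rw [ha, updf_same] at hab
        rw [ha]
        have : b ≠ jc := fun hh => hc2 ⟨ha, hh⟩
        omega
      · rwa [updf_ne _ _ _ _ ha] at hab
  · intro a b hab
    obtain ⟨hb1, hne1⟩ := hcell a (b+1) hab
    have hb0 : b < updf lam' re jc a := by omega
    obtain ⟨hb0', hne0⟩ := hcell a b hb0
    rw [upd_ne _ _ _ _ _ _ (by tauto), upd_ne _ _ _ _ _ _ (by tauto)]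
    exact sssyt_row hS a b hb1
  · intro a b hab
    obtain ⟨hb1, hne1⟩ := hcell (a+1) b hab
    have hb0 : b < updf lam' re jc a := by
      have := anti2 a (a+1) (by omega); omega
    obtain ⟨hb0', hne0⟩ := hcell a b hb0
    rw [upd_ne _ _ _ _ _ _ (by tauto), upd_ne _ _ _ _ _ _ (by tauto)]
    exact sssyt_col hS a b hb1
lemma insAux_stop {k : ℕ} {lam : ℕ → ℕ} {S : ℕ → ℕ → ℕ} {x r : ℕ}
    (h : findPos k lam S x r = lam r) :
    ∀ f, insAux k lam f S x r = (upd S r (lam r) x, r) := by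
  intro f
  cases f with
  | zero => simp only [insAux, h]
  | succ f =>
    simp only [insAux]
    rw [if_neg (by omega), h]

/-- the codomain type of the correspondence -/
def Rtype (n k ℓ : ℕ) :=
  Σ lam : {f : ℕ → ℕ // IsPartitionOf n f},
    {S : ℕ → ℕ → ℕ // SuperSSYT k ℓ lam.1 S} ×
    {T : ℕ → ℕ → ℕ // IsStandardTab n lam.1 T}

lemma Rtype_ext {n k ℓ : ℕ} {t t' : Rtype n k ℓ} (h1 : t.1.1 = t'.1.1)
    (h2 : t.2.1.1 = t'.2.1.1) (h3 : t.2.2.1 = t'.2.2.1) : t = t' := by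
  obtain ⟨⟨l, hl⟩, ⟨S, hS⟩, ⟨T, hT⟩⟩ := t
  obtain ⟨⟨l', hl'⟩, ⟨S', hS'⟩, ⟨T', hT'⟩⟩ := t'
  dsimp only at h1 h2 h3
  subst h1; subst h2; subst h3
  rfl

lemma main_step (n k ℓ : ℕ) (lam : ℕ → ℕ) (S T : ℕ → ℕ → ℕ) (x : ℕ)
    (hlam : IsPartitionOf n lam) (hS : SuperSSYT k ℓ lam S)
    (hT : IsStandardTab n lam T) (hx1 : 1 ≤ x) (hx2 : x ≤ k + ℓ)
    (p : (ℕ → ℕ → ℕ) × ℕ) (hp : insAux k lam (n+1) S x 0 = p) :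
    IsPartitionOf (n+1) (updf lam p.2 (lam p.2 + 1)) ∧
    SuperSSYT k ℓ (updf lam p.2 (lam p.2 + 1)) p.1 ∧
    IsStandardTab (n+1) (updf lam p.2 (lam p.2 + 1)) (upd T p.2 (lam p.2) (n+1)) ∧
    revAux k lam p.2 (upd p.1 p.2 (lam p.2) 0) (p.1 p.2 (lam p.2)) = (S, x) := by
  have anti := hlam.1
  have hEnd : lam (0 + (n+1)) = 0 := by
    rw [Nat.zero_add]; exact hlam.2.1 (n+1) (by omega)
  obtain ⟨h1, h2, h3, h4⟩ :=
    ins_spec k ℓ lam anti (n+1) S x 0 hS hx1 hx2 (Or.inl rfl) hEnd p hp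
  obtain ⟨hre, hpart⟩ := partition_add hlam h2
  exact ⟨hpart, h3, standard_add hlam hT h2, by rw [h4]; rfl⟩

/-- one step of RSK superinsertion as a map of bundled data -/
def F (n k ℓ : ℕ) (sz : Rtype n k ℓ × Fin (k + ℓ)) : Rtype (n+1) k ℓ :=
  ⟨⟨updf sz.1.1.1 (insAux k sz.1.1.1 (n+1) sz.1.2.1.1 (sz.2.1+1) 0).2
      (sz.1.1.1 (insAux k sz.1.1.1 (n+1) sz.1.2.1.1 (sz.2.1+1) 0).2 + 1),
    (main_step n k ℓ sz.1.1.1 sz.1.2.1.1 sz.1.2.2.1 (sz.2.1+1) sz.1.1.2 sz.1.2.1.2 sz.1.2.2.2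
      (Nat.le_add_left 1 _) sz.2.isLt _ rfl).1⟩,
   ⟨(insAux k sz.1.1.1 (n+1) sz.1.2.1.1 (sz.2.1+1) 0).1,
    (main_step n k ℓ sz.1.1.1 sz.1.2.1.1 sz.1.2.2.1 (sz.2.1+1) sz.1.1.2 sz.1.2.1.2 sz.1.2.2.2
      (Nat.le_add_left 1 _) sz.2.isLt _ rfl).2.1⟩,
   ⟨upd sz.1.2.2.1 (insAux k sz.1.1.1 (n+1) sz.1.2.1.1 (sz.2.1+1) 0).2
      (sz.1.1.1 (insAux k sz.1.1.1 (n+1) sz.1.2.1.1 (sz.2.1+1) 0).2) (n+1),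
    (main_step n k ℓ sz.1.1.1 sz.1.2.1.1 sz.1.2.2.1 (sz.2.1+1) sz.1.1.2 sz.1.2.1.2 sz.1.2.2.2
      (Nat.le_add_left 1 _) sz.2.isLt _ rfl).2.2.1⟩⟩

lemma F_inj (n k ℓ : ℕ) : Function.Injective (F n k ℓ) := by
  rintro ⟨⟨⟨lam, hlam⟩, ⟨S, hS⟩, ⟨T, hT⟩⟩, z⟩ ⟨⟨⟨lam', hlam'⟩, ⟨S', hS'⟩, ⟨T', hT'⟩⟩, z'⟩ heq
  dsimp only at hS hT hS' hT'
  have h1 := congrArg (fun t : Rtype (n+1) k ℓ => t.1.1) heq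
  have h2 := congrArg (fun t : Rtype (n+1) k ℓ => t.2.1.1) heq
  have h3 := congrArg (fun t : Rtype (n+1) k ℓ => t.2.2.1) heq
  simp only [F] at h1 h2 h3
  obtain ⟨hpa, hsa, hta, hra⟩ := main_step n k ℓ lam S T (z.1+1) hlam hS hT
    (by omega) (by have := z.isLt; omega) _ rfl
  obtain ⟨hpb, hsb, htb, hrb⟩ := main_step n k ℓ lam' S' T' (z'.1+1) hlam' hS' hT'
    (by omega) (by have := z'.isLt; omega) _ rfl
  set ra := (insAux k lam (n+1) S (z.1+1) 0).2 with hra0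
  set rb := (insAux k lam' (n+1) S' (z'.1+1) 0).2 with hrb0
  obtain ⟨q, -, hq3⟩ := hta.2.2.1 (n+1) (by omega) le_rfl
  have e1 := hq3 (ra, lam ra)
    ⟨by show lam ra < updf lam ra (lam ra + 1) ra
        have e := updf_same lam ra (lam ra + 1); omega,
     by show upd T ra (lam ra) (n+1) ra (lam ra) = n + 1
        exact upd_same _ _ _ _⟩
  have e2 := hq3 (rb, lam' rb)
    ⟨by show lam' rb < updf lam ra (lam ra + 1) rb
        have e := congrFun h1 rb
        have e' := updf_same lam' rb (lam' rb + 1)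
        omega,
     by show upd T ra (lam ra) (n+1) rb (lam' rb) = n + 1
        rw [h3]; exact upd_same _ _ _ _⟩
  have e12 := e1.trans e2.symm
  have hre : ra = rb := congrArg Prod.fst e12
  have hc : lam ra = lam' rb := congrArg Prod.snd e12
  have hlameq : lam = lam' := by
    funext i
    by_cases hi : i = ra
    · rw [hi, hc, ← hre]
    · have hgf := congrFun h1 i
      rw [updf_ne _ _ _ _ hi, updf_ne _ _ _ _ (by rw [← hre]; exact hi)] at hgf
      exact hgf
  have hTeq : T = T' := by
    funext a b
    have hgf := congrFun (congrFun h3 a) b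
    by_cases hcell : a = ra ∧ b = lam ra
    · obtain ⟨ha, hb⟩ := hcell
      have z1 : T a b = 0 := hT.2.1 a b (le_of_eq (by rw [ha, hb]))
      have z2 : T' a b = 0 := hT'.2.1 a b (le_of_eq (by rw [ha, hb, hc, ← hre]))
      rw [z1, z2]
    · rw [upd_ne _ _ _ _ _ _ (by tauto),
        upd_ne _ _ _ _ _ _ (by rw [← hc, ← hre]; tauto)] at hgf
      exact hgf
  have hrev : ((S, z.1+1) : (ℕ → ℕ → ℕ) × ℕ) = (S', z'.1+1) := by
    rw [← hra, ← hrb, ← h2, ← hc, ← hre, ← hlameq]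
  have hSeq : S = S' := congrArg Prod.fst hrev
  have hzeq : z.1 + 1 = z'.1 + 1 := congrArg Prod.snd hrev
  refine Prod.ext ?_ ?_
  · exact Rtype_ext hlameq hSeq hTeq
  · show z = z'
    exact Fin.val_injective (by omega)

lemma F_surj (n k ℓ : ℕ) : Function.Surjective (F n k ℓ) := by
  rintro ⟨⟨lam', hlam'⟩, ⟨S', hS'⟩, ⟨T', hT'⟩⟩
  dsimp only at hS' hT'
  obtain ⟨⟨re, jc⟩, ⟨hq1, hq2⟩, hq3⟩ := hT'.2.2.1 (n+1) (by omega) le_rfl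
  dsimp only at hq1 hq2
  have hr : jc + 1 = lam' re := by
    by_contra hh
    have hlt : jc + 1 < lam' re := by omega
    have hs := hT'.2.2.2.1 re jc hlt
    have h2 := (hT'.1 re (jc+1) hlt).2
    omega
  have hbel : lam' (re+1) ≤ jc := by
    by_contra hh
    have hlt : jc < lam' (re+1) := by omega
    have hs := hT'.2.2.2.2 re jc hlt
    have h2 := (hT'.1 (re+1) jc hlt).2
    omega
  obtain ⟨hre, hpart⟩ := partition_sub hlam' hr hbel
  have anti2 := hpart.1
  have hS0 : SuperSSYT k ℓ (updf lam' re jc) (upd S' re jc 0) := sssyt_sub hS' hr anti2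
  have hT0 : IsStandardTab n (updf lam' re jc) (upd T' re jc 0) := standard_sub hT' hr anti2 hq2
  have hy := hS'.1 re jc (by omega)
  have hInvR : InvR k (updf lam' re jc) (upd S' re jc 0) (S' re jc) re := by
    rcases Nat.eq_zero_or_pos re with h0 | hrpos
    · exact Or.inl h0
    right
    refine ⟨jc, ?_, ?_, ?_⟩
    · rw [updf_ne _ _ _ _ (by omega)]
      have := hlam'.1 (re-1) re (by omega)
      omega
    · rw [upd_ne _ _ _ _ _ _ (Or.inl (by omega))]
      have hcl := sssyt_col hS' (re-1) jc (by rw [show re - 1 + 1 = re by omega]; omega)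
      rwa [show re - 1 + 1 = re by omega] at hcl
    · intro j hj1 hj2
      rw [updf_same] at hj2
      omega
  obtain ⟨hv1, hv2, hv3, hv4⟩ := rev_spec k ℓ (updf lam' re jc) anti2 re
    (upd S' re jc 0) (S' re jc) hS0 hy.1 hy.2 hInvR _ rfl
  set pr := revAux k (updf lam' re jc) re (upd S' re jc 0) (S' re jc) with hpr
  have hfz : insAux k (updf lam' re jc) (n+1) pr.1 (pr.2 - 1 + 1) 0 = (S', re) := by
    rw [show pr.2 - 1 + 1 = pr.2 by omega]
    rw [show n + 1 = re + (n + 1 - re) by omega, hv4 (n+1-re)]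
    have hfp : findPos k (updf lam' re jc) (upd S' re jc 0) (S' re jc) re
        = updf lam' re jc re := by
      refine findPos_eq le_rfl (Or.inl rfl) ?_
      intro j hj
      rw [updf_same] at hj
      rw [upd_ne _ _ _ _ _ _ (Or.inr (by omega))]
      exact fun hcc => not_Rb_of_Cb hcc (sssyt_chain hS' re j jc hj (by omega))
    rw [insAux_stop hfp]
    rw [updf_same, upd_upd, upd_self _ _ _ rfl]
  refine ⟨(⟨⟨updf lam' re jc, hpart⟩, ⟨pr.1, hv1⟩, ⟨upd T' re jc 0, hT0⟩⟩,
    ⟨pr.2 - 1, by omega⟩), ?_⟩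
  apply Rtype_ext
  · show updf (updf lam' re jc) (insAux k (updf lam' re jc) (n+1) pr.1 (pr.2 - 1 + 1) 0).2
      ((updf lam' re jc) (insAux k (updf lam' re jc) (n+1) pr.1 (pr.2 - 1 + 1) 0).2 + 1) = lam'
    rw [hfz]
    show updf (updf lam' re jc) re (updf lam' re jc re + 1) = lam'
    rw [updf_same]
    funext i
    by_cases hi : i = re
    · rw [hi, updf_same]; exact hr
    · rw [updf_ne _ _ _ _ hi, updf_ne _ _ _ _ hi]
  · show (insAux k (updf lam' re jc) (n+1) pr.1 (pr.2 - 1 + 1) 0).1 = S'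
    rw [hfz]
  · show upd (upd T' re jc 0) (insAux k (updf lam' re jc) (n+1) pr.1 (pr.2 - 1 + 1) 0).2
      ((updf lam' re jc) (insAux k (updf lam' re jc) (n+1) pr.1 (pr.2 - 1 + 1) 0).2) (n+1) = T'
    rw [hfz]
    show upd (upd T' re jc 0) re (updf lam' re jc re) (n+1) = T'
    rw [updf_same, upd_upd]
    exact upd_self _ _ _ hq2

/-- the base case: everything is unique for `n = 0`. -/
def t0 (k ℓ : ℕ) : Rtype 0 k ℓ :=
  ⟨⟨fun _ => 0, ⟨fun _ _ _ => le_rfl, fun _ _ => rfl, by simp⟩⟩,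
   ⟨fun _ _ => 0, ⟨fun a b hb => absurd hb (by simp), fun _ _ _ => rfl,
      fun a b hb => absurd hb (by simp), fun a b hb => absurd hb (by simp)⟩⟩,
   ⟨fun _ _ => 0, ⟨fun a b hb => absurd hb (by simp), fun _ _ _ => rfl,
      fun v hv1 hv2 => absurd (hv1.trans hv2) (by omega),
      fun a b hb => absurd hb (by simp), fun a b hb => absurd hb (by simp)⟩⟩⟩

lemma Rtype0_eq {k ℓ : ℕ} (t : Rtype 0 k ℓ) : t = t0 k ℓ := by
  refine Rtype_ext ?_ ?_ ?_
  · funext i; exact t.1.2.2.1 i (Nat.zero_le i)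
  · funext a b
    exact t.2.1.2.2.1 a b
      (by rw [show t.1.1 a = 0 from t.1.2.2.1 a (Nat.zero_le a)]; omega)
  · funext a b
    exact t.2.2.2.2.1 a b
      (by rw [show t.1.1 a = 0 from t.1.2.2.1 a (Nat.zero_le a)]; omega)

def e0 (k ℓ : ℕ) : (Fin 0 → Fin (k+ℓ)) ≃ Rtype 0 k ℓ where
  toFun _ := t0 k ℓ
  invFun _ := fun i => i.elim0
  left_inv f := by funext i; exact i.elim0
  right_inv t := (Rtype0_eq t).symm

noncomputable def eStep (n k ℓ : ℕ) : (Rtype n k ℓ × Fin (k+ℓ)) ≃ Rtype (n+1) k ℓ :=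
  Equiv.ofBijective (F n k ℓ) ⟨F_inj n k ℓ, F_surj n k ℓ⟩

end SRSK

/-- The RSK superinsertion bijection: sequences of `n` letters from an alphabet
with `k` even and `ℓ` odd letters correspond bijectively to pairs `(S,T)` of a
`(k,ℓ)`-semistandard tableau `S` and a standard tableau `T` of the same shape,
a partition of `n` (necessarily a `(k,ℓ)`-hook partition, since otherwise no
`(k,ℓ)`-semistandard tableau of that shape exists). -/
theorem stmt_12 (n k ℓ : ℕ) :
    Nonempty ((Fin n → Fin (k + ℓ)) ≃
      (Σ lam : {f : ℕ → ℕ // IsPartitionOf n f},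
        {S : ℕ → ℕ → ℕ // SuperSSYT k ℓ lam.1 S} ×
        {T : ℕ → ℕ → ℕ // IsStandardTab n lam.1 T})) := by
  induction n with
  | zero => exact ⟨SRSK.e0 k ℓ⟩
  | succ n ih =>
    obtain ⟨e⟩ := ih
    exact ⟨(Fin.consEquiv (fun _ : Fin (n+1) => Fin (k+ℓ))).symm.trans
      (((Equiv.prodComm _ _).trans (Equiv.prodCongr e (Equiv.refl _))).trans
        (SRSK.eStep n k ℓ))⟩
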